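/- arXiv:2105.00432 — 3 statements merged into one kernel-verified Lean document; each statement's English description precedes it below -/
import Mathlib

section
/- Let (𝔛,d) be a complete separable metric space and ν a doubling Borel measure such that (𝔛,d,ν) supports a weak (1,1)-Poincaré inequality. Let Ω ⊆ 𝔛 be an open bounded regular domain with ν(∂Ω) = 0 such that (Ω,d,ν) supports a weak (1,1)-Poincaré inequality, and let φ_t^Ω be its defining sequence. Then lim_{t→0⁺} ∫_𝔛 |∇φ_t^Ω| dν = |D1_Ω|_ν(𝔛). -/
open MeasureTheory Metric Set Filter Topology ENNReal

noncomputable section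

variable {X : Type*}

/-- The slope (local Lipschitz constant) of `u : X → ℝ` relative to the set `Ω`:
`|∇u|(x) = limsup_{y → x, y ∈ Ω, y ≠ x} |u y - u x| / d(y,x)` (with value `0` at points
isolated in `Ω`). -/
def slopeWithin [MetricSpace X] (Ω : Set X) (u : X → ℝ) (x : X) : ℝ≥0∞ :=
  Filter.limsup (fun y => ENNReal.ofReal (|u y - u x| / dist y x)) (nhdsWithin x (Ω \ {x}))

/-- `u` is locally Lipschitz on `Ω`. -/
def LocLipschitzOn [MetricSpace X] (Ω : Set X) (u : X → ℝ) : Prop :=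
  ∀ x ∈ Ω, ∃ K : NNReal, ∃ t ∈ nhdsWithin x Ω, LipschitzOnWith K u t

/-- `un → u` in `L¹(Ω, ν)`. -/
def TendstoL1 [MeasurableSpace X] (ν : Measure X) (Ω : Set X)
    (un : ℕ → X → ℝ) (u : X → ℝ) : Prop :=
  Tendsto (fun n => ∫⁻ x in Ω, ENNReal.ofReal |un n x - u x| ∂ν) atTop (𝓝 0)

/-- The total variation `|Du|_ν(Ω)` of `u` on `Ω`, defined by relaxation of the integral of the
slope along locally Lipschitz approximations in `L¹(Ω,ν)`. -/
def totalVariationOn [MetricSpace X] [MeasurableSpace X] (ν : Measure X) (Ω : Set X)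
    (u : X → ℝ) : ℝ≥0∞ :=
  sInf { V : ℝ≥0∞ | ∃ un : ℕ → X → ℝ, (∀ n, LocLipschitzOn Ω (un n)) ∧ TendstoL1 ν Ω un u ∧
    V = Filter.liminf (fun n => ∫⁻ x in Ω, slopeWithin Ω (un n) x ∂ν) atTop }

/-- `u ∈ BV(Ω, d, ν)`. -/
def MemBV [MetricSpace X] [MeasurableSpace X] (ν : Measure X) (Ω : Set X) (u : X → ℝ) : Prop :=
  Integrable u (ν.restrict Ω) ∧ totalVariationOn ν Ω u < ⊤

/-- The `BV(Ω,d,ν)` norm: `‖u‖_{L¹(Ω,ν)} + |Du|_ν(Ω)`. -/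
def bvNorm [MetricSpace X] [MeasurableSpace X] (ν : Measure X) (Ω : Set X) (u : X → ℝ) : ℝ≥0∞ :=
  (∫⁻ x in Ω, ENNReal.ofReal |u x| ∂ν) + totalVariationOn ν Ω u

/-- The restriction of `ν` to `S` is a doubling measure on the metric space `(S, d)`. -/
def DoublingOn [MetricSpace X] [MeasurableSpace X] (ν : Measure X) (S : Set X) : Prop :=
  ∃ C : NNReal, 1 ≤ C ∧ ∀ x ∈ S, ∀ r : ℝ, 0 < r →
    0 < ν (S ∩ ball x (2 * r)) ∧ ν (S ∩ ball x (2 * r)) ≤ (C : ℝ≥0∞) * ν (S ∩ ball x r) ∧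
      ν (S ∩ ball x r) < ⊤

/-- The metric speed `|γ̇|(t) = limsup_{τ → 0} d(γ(t+τ), γ t)/|τ|`. -/
def metricSpeed [MetricSpace X] (γ : ℝ → X) (t : ℝ) : ℝ≥0∞ :=
  Filter.limsup (fun τ : ℝ => ENNReal.ofReal (dist (γ (t + τ)) (γ t) / |τ|)) (𝓝[≠] (0 : ℝ))

/-- `g` is an upper gradient of `u` on the metric space `(S, d)`: for every Lipschitz curve
`γ : [a,b] → S` one has `|u(γ b) - u(γ a)| ≤ ∫_a^b g(γ t) |γ̇|(t) dt`. -/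
def IsUpperGradientOn [MetricSpace X] (S : Set X) (u : X → ℝ) (g : X → ℝ≥0∞) : Prop :=
  ∀ (a b : ℝ) (γ : ℝ → X), a ≤ b → (∃ K : NNReal, LipschitzOnWith K γ (Set.Icc a b)) →
    Set.MapsTo γ (Set.Icc a b) S →
    ENNReal.ofReal |u (γ b) - u (γ a)| ≤ ∫⁻ t in Set.Icc a b, g (γ t) * metricSpeed γ t

/-- The metric measure space `(S, d, ν)` (with restricted distance and measure) supports a weak
`(1,1)`-Poincaré inequality. -/
def WeakPoincareOn [MetricSpace X] [MeasurableSpace X] (ν : Measure X) (S : Set X) : Prop :=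
  ∃ C l : ℝ, 0 < C ∧ 1 ≤ l ∧ ∀ x ∈ S, ∀ r : ℝ, 0 < r →
    ∀ (u : X → ℝ) (g : X → ℝ≥0∞), Measurable u → Measurable g → IsUpperGradientOn S u g →
      (∫⁻ y in S ∩ ball x r, ENNReal.ofReal |u y - ⨍ z in S ∩ ball x r, u z ∂ν| ∂ν) /
          ν (S ∩ ball x r) ≤
        ENNReal.ofReal (C * r) *
          ((∫⁻ y in S ∩ ball x (l * r), g y ∂ν) / ν (S ∩ ball x (l * r)))

/-- Codimension-one Hausdorff premeasure at scale `R`: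
`inf { Σᵢ ν(B(xᵢ,rᵢ))/rᵢ : A ⊆ ⋃ᵢ B(xᵢ,rᵢ), 0 < rᵢ ≤ R }`. -/
def codimOneHPre [MetricSpace X] [MeasurableSpace X] (ν : Measure X) (R : ℝ) (A : Set X) :
    ℝ≥0∞ :=
  ⨅ (c : ℕ → X × ℝ)
    (_ : (∀ i, 0 < (c i).2 ∧ (c i).2 ≤ R) ∧ A ⊆ ⋃ i, ball (c i).1 (c i).2),
    ∑' i, ν (ball (c i).1 (c i).2) / ENNReal.ofReal (c i).2

/-- The codimension-one Hausdorff measure `ℋ` associated to `ν`, as the limit (= supremum, by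
antitonicity) of the premeasures as the scale `R → 0⁺`. -/
def codimOneH [MetricSpace X] [MeasurableSpace X] (ν : Measure X) (A : Set X) : ℝ≥0∞ :=
  ⨆ (R : ℝ) (_ : 0 < R), codimOneHPre ν R A

/-- `P` holds at `ℋ`-a.e. point of `A`. -/
def HAEOn [MetricSpace X] [MeasurableSpace X] (ν : Measure X) (A : Set X) (P : X → Prop) :
    Prop :=
  codimOneH ν {x ∈ A | ¬ P x} = 0

/-- The `L¹(A, ℋ)` norm `∫_A |f| dℋ` of `f`, as the Choquet (layer-cake) integral of `|f|`
over `A` against the codimension-one Hausdorff measure. -/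
def hL1Norm [MetricSpace X] [MeasurableSpace X] (ν : Measure X) (A : Set X) (f : X → ℝ) :
    ℝ≥0∞ :=
  ∫⁻ t in Set.Ioi (0 : ℝ), codimOneH ν {x ∈ A | t < |f x|}

/-- `c` is the trace of `u` at the point `x ∈ ∂Ω`:
`⨍_{Ω ∩ B(x,r)} |u - c| dν → 0` as `r → 0⁺`. -/
def IsTraceAt [MetricSpace X] [MeasurableSpace X] (ν : Measure X) (Ω : Set X) (u : X → ℝ)
    (x : X) (c : ℝ) : Prop :=
  Tendsto (fun r : ℝ =>
      (∫⁻ y in Ω ∩ ball x r, ENNReal.ofReal |u y - c| ∂ν) / ν (Ω ∩ ball x r))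
    (𝓝[>] (0 : ℝ)) (𝓝 0)

/-- Standing assumptions on the domain `Ω`: open, bounded, supporting a weak `(1,1)`-Poincaré
inequality, satisfying the measure density condition, with boundary Ahlfors codimension-one
regular. -/
def StandingAssumptions [MetricSpace X] [MeasurableSpace X] (ν : Measure X) (Ω : Set X) :
    Prop :=
  IsOpen Ω ∧ Bornology.IsBounded Ω ∧ WeakPoincareOn ν Ω ∧
  (∃ C : NNReal, 0 < C ∧ HAEOn ν (frontier Ω)
      (fun x => ∀ r : ℝ, 0 < r → r < Metric.diam Ω →
        (C : ℝ≥0∞) * ν (ball x r) ≤ ν (Ω ∩ ball x r))) ∧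
  (∃ C : ℝ, 0 < C ∧ ∀ x ∈ frontier Ω, ∀ r : ℝ, 0 < r → r < Metric.diam Ω →
      ν (ball x r) / ENNReal.ofReal r ≤ ENNReal.ofReal C * codimOneH ν (ball x r ∩ frontier Ω) ∧
      codimOneH ν (ball x r ∩ frontier Ω) ≤ ENNReal.ofReal C * (ν (ball x r) / ENNReal.ofReal r))

/-- The traces of `u` and `v` on `∂Ω` exist and coincide `ℋ`-a.e. -/
def SameTrace [MetricSpace X] [MeasurableSpace X] (ν : Measure X) (Ω : Set X) (u v : X → ℝ) :
    Prop :=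
  HAEOn ν (frontier Ω) (fun x => ∃ c : ℝ, IsTraceAt ν Ω u x c ∧ IsTraceAt ν Ω v x c)

/-- `u` is a function of least gradient in `Ω`: it minimises the total variation among all BV
functions with the same trace on `∂Ω`. -/
def IsLeastGradient [MetricSpace X] [MeasurableSpace X] (ν : Measure X) (Ω : Set X)
    (u : X → ℝ) : Prop :=
  MemBV ν Ω u ∧ ∀ v : X → ℝ, MemBV ν Ω v → SameTrace ν Ω u v →
    totalVariationOn ν Ω u ≤ totalVariationOn ν Ω v

/-- `Ω_t = { x ∈ Ω : dist(x, Ωᶜ) ≥ t }`. -/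
def innerSet [MetricSpace X] (Ω : Set X) (t : ℝ) : Set X :=
  {x ∈ Ω | t ≤ Metric.infDist x Ωᶜ}

/-- `Ω` is a regular domain: an open set of finite perimeter with
`|D1_Ω|_ν(X) = limsup_{t→0⁺} ν(Ω ∖ Ω_t)/t`. -/
def IsRegularDomain [MetricSpace X] [MeasurableSpace X] (ν : Measure X) (Ω : Set X) : Prop :=
  IsOpen Ω ∧ MemBV ν Set.univ (Ω.indicator fun _ => (1 : ℝ)) ∧
  totalVariationOn ν Set.univ (Ω.indicator fun _ => (1 : ℝ)) =
    Filter.limsup (fun t : ℝ => ν (Ω \ innerSet Ω t) / ENNReal.ofReal t) (𝓝[>] (0 : ℝ))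

/-- The defining sequence `φ_t^Ω` of a regular domain: `0` outside `Ω`, `dist(x,Ωᶜ)/t` on
`Ω ∖ Ω_t` and `1` on `Ω_t`. -/
def definingSeq [MetricSpace X] (Ω : Set X) (t : ℝ) : X → ℝ :=
  Ω.indicator fun x => min 1 (Metric.infDist x Ωᶜ / t)

/-- The inner perimeter `P₊(Ω, U)`. -/
def innerPerimeter [MetricSpace X] [MeasurableSpace X] (ν : Measure X) (Ω U : Set X) : ℝ≥0∞ :=
  sInf { V : ℝ≥0∞ | ∃ ψ : ℕ → X → ℝ, (∀ n, LocLipschitzOn U (ψ n)) ∧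
    TendstoL1 ν U ψ (Ω.indicator fun _ => (1 : ℝ)) ∧ (∀ n, ∀ x ∈ U \ Ω, ψ n x = 0) ∧
    V = Filter.liminf (fun n => ∫⁻ x in U, slopeWithin U (ψ n) x ∂ν) atTop }


section AuxSlope

variable [MetricSpace X]

private lemma defSeq_eq' (Ω : Set X) {t : ℝ} (ht : 0 < t) :
    definingSeq Ω t = fun x => min 1 (Metric.infDist x Ωᶜ / t) := by
  funext x
  by_cases hx : x ∈ Ω
  · simp [definingSeq, Set.indicator_of_mem hx]
  · have h0 : Metric.infDist x Ωᶜ = 0 := Metric.infDist_zero_of_mem hx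
    simp [definingSeq, Set.indicator_of_notMem hx, h0]

private lemma defSeq_dist_le (Ω : Set X) {t : ℝ} (ht : 0 < t) (x y : X) :
    |min 1 (Metric.infDist y Ωᶜ / t) - min 1 (Metric.infDist x Ωᶜ / t)| ≤ dist y x / t := by
  refine (abs_min_sub_min_le_max _ _ _ _).trans ?_
  rw [sub_self, abs_zero, max_eq_right (abs_nonneg _), div_sub_div_same, abs_div,
    abs_of_pos ht]
  have h := (Metric.lipschitz_infDist_pt (Ωᶜ : Set X)).dist_le_mul y x
  rw [Real.dist_eq, NNReal.coe_one, one_mul] at h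
  gcongr

private lemma slope_le_of_dist_le {u : X → ℝ} {K : ℝ}
    (h : ∀ x y, |u y - u x| ≤ K * dist y x) (x : X) :
    slopeWithin Set.univ u x ≤ ENNReal.ofReal K := by
  refine Filter.limsup_le_of_le (by isBoundedDefault) ?_
  filter_upwards [eventually_mem_nhdsWithin] with y hy
  have hne : y ≠ x := hy.2
  have hd : 0 < dist y x := dist_pos.mpr hne
  exact ENNReal.ofReal_le_ofReal ((div_le_iff₀ hd).mpr (h x y))

private lemma slope_zero_of_const {u : X → ℝ} {x : X} {s : Set X}
    (hs : s ∈ 𝓝 x) (hconst : ∀ y ∈ s, u y = u x) : slopeWithin Set.univ u x = 0 := by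
  refine le_antisymm (Filter.limsup_le_of_le (by isBoundedDefault) ?_) (zero_le)
  filter_upwards [nhdsWithin_le_nhds hs] with y hy
  simp [hconst y hy]

private lemma slope_defSeq_bound (Ω : Set X) {t : ℝ} (ht : 0 < t) (x : X) :
    slopeWithin Set.univ (definingSeq Ω t) x ≤
      (closure Ω ∩ {y | Metric.infDist y Ωᶜ ≤ t}).indicator
        (fun _ => ENNReal.ofReal (1 / t)) x := by
  rw [defSeq_eq' Ω ht]
  by_cases hx : x ∈ closure Ω ∩ {y | Metric.infDist y Ωᶜ ≤ t}
  · rw [Set.indicator_of_mem hx]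
    refine slope_le_of_dist_le (fun a b => ?_) x
    calc |min 1 (Metric.infDist b Ωᶜ / t) - min 1 (Metric.infDist a Ωᶜ / t)|
        ≤ dist b a / t := defSeq_dist_le Ω ht a b
      _ = (1 / t) * dist b a := by ring
  · rw [Set.indicator_of_notMem hx]
    rw [Set.mem_inter_iff, not_and_or] at hx
    rcases hx with hx | hx
    · refine le_of_eq (slope_zero_of_const
        (isClosed_closure.isOpen_compl.mem_nhds hx) fun y hy => ?_)
      have hyc : Metric.infDist y Ωᶜ = 0 :=
        Metric.infDist_zero_of_mem (fun hyΩ => hy (subset_closure hyΩ))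
      have hxc : Metric.infDist x Ωᶜ = 0 :=
        Metric.infDist_zero_of_mem (fun hxΩ => hx (subset_closure hxΩ))
      simp [hyc, hxc]
    · rw [Set.mem_setOf_eq, not_le] at hx
      have hopen : IsOpen {y : X | t < Metric.infDist y Ωᶜ} :=
        isOpen_lt continuous_const (Metric.continuous_infDist_pt (Ωᶜ : Set X))
      refine le_of_eq (slope_zero_of_const (hopen.mem_nhds hx) fun y hy => ?_)
      have h1 : (1 : ℝ) ≤ Metric.infDist y Ωᶜ / t := (one_le_div ht).mpr (le_of_lt hy)
      have h2 : (1 : ℝ) ≤ Metric.infDist x Ωᶜ / t := (one_le_div ht).mpr hx.le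
      simp [min_eq_left h1, min_eq_left h2]

private lemma ennreal_scale (a : ℝ≥0∞) {c τ : ℝ≥0∞} (hc0 : c ≠ 0) (hc : c ≠ ∞) :
    c * (a / (c * τ)) = a / τ := by
  rw [div_eq_mul_inv, div_eq_mul_inv, ENNReal.mul_inv (Or.inl hc0) (Or.inl hc)]
  calc c * (a * (c⁻¹ * τ⁻¹)) = (c * c⁻¹) * (a * τ⁻¹) := by ring
    _ = a * τ⁻¹ := by rw [ENNReal.mul_inv_cancel hc0 hc, one_mul]

private lemma map_mul_nhdsGT {c : ℝ} (hc : 0 < c) :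
    Filter.map (fun t : ℝ => c * t) (𝓝[>] (0 : ℝ)) = 𝓝[>] (0 : ℝ) := by
  have h := (Homeomorph.mulLeft₀ c hc.ne').isEmbedding.map_nhdsWithin_eq (Set.Ioi 0) 0
  rw [Homeomorph.coe_mulLeft₀] at h
  have himg : (fun t : ℝ => c * t) '' Set.Ioi 0 = Set.Ioi (0 : ℝ) := by
    ext y
    constructor
    · rintro ⟨s, hs, rfl⟩
      exact mul_pos hc hs
    · intro hy
      exact ⟨y / c, div_pos hy hc, by field_simp⟩
  simpa [himg] using h

private lemma limsup_comp_mul {c : ℝ} (hc : 0 < c) (g : ℝ → ℝ≥0∞) :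
    Filter.limsup (fun t : ℝ => g (c * t)) (𝓝[>] (0 : ℝ)) =
      Filter.limsup g (𝓝[>] (0 : ℝ)) := by
  conv_rhs => rw [← map_mul_nhdsGT hc]
  unfold Filter.limsup
  rw [Filter.map_map]
  rfl

private lemma innerSet_eq [MetricSpace X] (Ω : Set X) (t : ℝ) :
    innerSet Ω t = Ω ∩ {x | t ≤ Metric.infDist x Ωᶜ} := rfl

private lemma measSet_innerDiff [MetricSpace X] [MeasurableSpace X] [BorelSpace X]
    (Ω : Set X) (hΩ : IsOpen Ω) (t : ℝ) : MeasurableSet (Ω \ innerSet Ω t) := by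
  rw [innerSet_eq]
  exact hΩ.measurableSet.diff (hΩ.measurableSet.inter
    ((isClosed_le continuous_const (Metric.continuous_infDist_pt (Ωᶜ : Set X))).measurableSet))

end AuxSlope

/-- `Proposition prop:weakconvergence`: for a regular domain `Ω`, the integrals
of the slopes of the defining sequence converge to the perimeter:
`lim_{t→0⁺} ∫_X |∇φ_t^Ω| dν = |D1_Ω|_ν(X)`. -/
theorem defining_sequence_slope_integral_tendsto_perimeter
    [MetricSpace X] [CompleteSpace X] [TopologicalSpace.SeparableSpace X]
    [MeasurableSpace X] [BorelSpace X] (ν : Measure X) (Ω : Set X)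
    (hdoub : DoublingOn ν Set.univ) (hPI : WeakPoincareOn ν Set.univ)
    (hΩbd : Bornology.IsBounded Ω) (hreg : IsRegularDomain ν Ω)
    (hnull : ν (frontier Ω) = 0) (hPIΩ : WeakPoincareOn ν Ω) :
    Tendsto (fun t : ℝ => ∫⁻ x, slopeWithin Set.univ (definingSeq Ω t) x ∂ν)
      (𝓝[>] (0 : ℝ))
      (𝓝 (totalVariationOn ν Set.univ (Ω.indicator fun _ => (1 : ℝ)))) := by
  classical
  obtain ⟨hΩopen, hBV, heq⟩ := hreg
  rcases Set.eq_empty_or_nonempty (Ωᶜ : Set X) with hcompl | hcompl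
  · -- degenerate case `Ω = univ`: the hypotheses force `ν = 0`.
    have hΩuniv : Ω = Set.univ := by rwa [← Set.compl_empty_iff]
    have hinner : ∀ t : ℝ, 0 < t → innerSet Ω t = ∅ := by
      intro t ht
      ext x
      simp only [innerSet_eq, Set.mem_inter_iff, Set.mem_setOf_eq, Set.mem_empty_iff_false,
        iff_false, not_and, not_le]
      intro _
      rw [hΩuniv, Set.compl_univ, Metric.infDist_empty]
      exact ht
    have hν : ν Set.univ = 0 := by
      by_contra hν0
      have hev : ∀ᶠ t in 𝓝[>] (0 : ℝ),
          ν (Ω \ innerSet Ω t) / ENNReal.ofReal t = ν Set.univ * (ENNReal.ofReal t)⁻¹ := by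
        filter_upwards [self_mem_nhdsWithin] with t ht
        rw [hinner t ht, Set.diff_empty, hΩuniv, div_eq_mul_inv]
      have h1 : Tendsto (fun t : ℝ => (ENNReal.ofReal t)⁻¹) (𝓝[>] (0 : ℝ)) (𝓝 ⊤) := by
        have h0 : Tendsto (fun t : ℝ => ENNReal.ofReal t) (𝓝[>] (0 : ℝ)) (𝓝 0) := by
          simpa using (ENNReal.continuous_ofReal.tendsto 0).mono_left nhdsWithin_le_nhds
        simpa using ENNReal.tendsto_inv_iff.mpr h0
      have h2 : Tendsto (fun t : ℝ => ν (Ω \ innerSet Ω t) / ENNReal.ofReal t)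
          (𝓝[>] (0 : ℝ)) (𝓝 ⊤) := by
        have h3 := ENNReal.Tendsto.const_mul (a := ν Set.univ) h1 (Or.inl (ENNReal.top_ne_zero))
        rw [ENNReal.mul_top hν0] at h3
        exact Tendsto.congr' (hev.mono fun t ht => ht.symm) h3
      have htop := h2.limsup_eq
      rw [← heq] at htop
      exact absurd (htop ▸ hBV.2) (lt_irrefl ⊤)
    have hν' : ν = 0 := Measure.measure_univ_eq_zero.mp hν
    subst hν'
    have hTV0 : totalVariationOn (0 : Measure X) Set.univ (Ω.indicator fun _ => (1 : ℝ)) = 0 := by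
      refine le_antisymm (sInf_le ?_) (zero_le)
      refine ⟨fun _ _ => 0, fun n x _ =>
        ⟨0, Set.univ, Filter.univ_mem, (LipschitzWith.const 0).lipschitzOnWith⟩, ?_, ?_⟩
      · unfold TendstoL1
        simpa using tendsto_const_nhds
      · simp [Filter.liminf_const]
    rw [hTV0]
    simpa using (tendsto_const_nhds :
      Tendsto (fun _ : ℝ => (0 : ℝ≥0∞)) (𝓝[>] (0 : ℝ)) (𝓝 0))
  -- main case: `Ωᶜ` nonempty
  have hνΩ : ν Ω ≠ ∞ := by
    rcases Set.eq_empty_or_nonempty Ω with rfl | ⟨x₀, hx₀⟩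
    · simp
    obtain ⟨r, hr⟩ := hΩbd.subset_closedBall x₀
    have hr0 : 0 ≤ r := by
      have := hr hx₀
      rwa [Metric.mem_closedBall, dist_self] at this
    obtain ⟨C, hC1, hC⟩ := hdoub
    have h := (hC x₀ trivial (r + 1) (by linarith)).2.2
    rw [Set.univ_inter] at h
    exact ne_of_lt (lt_of_le_of_lt
      (measure_mono (hr.trans (Metric.closedBall_subset_ball (by linarith)))) h)
  set F : ℝ → ℝ≥0∞ := fun t => ∫⁻ x, slopeWithin Set.univ (definingSeq Ω t) x ∂ν with hFdef
  set P := Filter.limsup (fun t : ℝ => ν (Ω \ innerSet Ω t) / ENNReal.ofReal t)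
    (𝓝[>] (0 : ℝ)) with hPdef
  have hPne : P ≠ ⊤ := by rw [← heq]; exact hBV.2.ne
  -- upper bound
  have hFle : ∀ ε : ℝ, 0 < ε → ∀ t : ℝ, 0 < t →
      F t ≤ ENNReal.ofReal (1 + ε) *
        (ν (Ω \ innerSet Ω ((1 + ε) * t)) / ENNReal.ofReal ((1 + ε) * t)) := by
    intro ε hε t ht
    have hmeasS : MeasurableSet (closure Ω ∩ {y | Metric.infDist y Ωᶜ ≤ t}) :=
      isClosed_closure.measurableSet.inter
        ((isClosed_le (Metric.continuous_infDist_pt (Ωᶜ : Set X))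
          continuous_const).measurableSet)
    have h1 : F t ≤ ENNReal.ofReal (1 / t) *
        ν (closure Ω ∩ {y | Metric.infDist y Ωᶜ ≤ t}) := by
      refine (lintegral_mono (slope_defSeq_bound Ω ht)).trans ?_
      rw [lintegral_indicator_const hmeasS]
    have hsub : closure Ω ∩ {y | Metric.infDist y Ωᶜ ≤ t} ⊆
        frontier Ω ∪ (Ω \ innerSet Ω ((1 + ε) * t)) := by
      rintro y ⟨hyc, hyd⟩
      by_cases hyΩ : y ∈ Ω
      · refine Or.inr ⟨hyΩ, fun hmem => ?_⟩
        have h2 := hmem.2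
        rw [Set.mem_setOf_eq] at hyd
        nlinarith
      · exact Or.inl ⟨hyc, by rwa [hΩopen.interior_eq]⟩
    have h2 : ν (closure Ω ∩ {y | Metric.infDist y Ωᶜ ≤ t}) ≤
        ν (Ω \ innerSet Ω ((1 + ε) * t)) := by
      refine le_trans (measure_mono hsub) ?_
      refine le_trans (measure_union_le _ _) ?_
      rw [hnull, zero_add]
    have hc0 : ENNReal.ofReal (1 + ε) ≠ 0 := (ENNReal.ofReal_pos.mpr (by linarith)).ne'
    calc F t ≤ ENNReal.ofReal (1 / t) * ν (Ω \ innerSet Ω ((1 + ε) * t)) := by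
          exact h1.trans (by gcongr)
      _ = ENNReal.ofReal (1 + ε) *
          (ν (Ω \ innerSet Ω ((1 + ε) * t)) / ENNReal.ofReal ((1 + ε) * t)) := by
          rw [ENNReal.ofReal_mul (by linarith : (0 : ℝ) ≤ 1 + ε),
            ennreal_scale _ hc0 ENNReal.ofReal_ne_top, one_div,
            ENNReal.ofReal_inv_of_pos ht, div_eq_mul_inv, mul_comm]
  have hupper : Filter.limsup F (𝓝[>] (0 : ℝ)) ≤ P := by
    have hlim_le : ∀ ε : ℝ, 0 < ε →
        Filter.limsup F (𝓝[>] (0 : ℝ)) ≤ ENNReal.ofReal (1 + ε) * P := by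
      intro ε hε
      calc Filter.limsup F (𝓝[>] (0 : ℝ))
          ≤ Filter.limsup (fun t => ENNReal.ofReal (1 + ε) *
              (ν (Ω \ innerSet Ω ((1 + ε) * t)) / ENNReal.ofReal ((1 + ε) * t)))
              (𝓝[>] (0 : ℝ)) := by
            refine Filter.limsup_le_limsup ?_
            filter_upwards [self_mem_nhdsWithin] with t ht
            exact hFle ε hε t ht
        _ = ENNReal.ofReal (1 + ε) * Filter.limsup
              (fun t => ν (Ω \ innerSet Ω ((1 + ε) * t)) / ENNReal.ofReal ((1 + ε) * t))
              (𝓝[>] (0 : ℝ)) :=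
            ENNReal.limsup_const_mul_of_ne_top ENNReal.ofReal_ne_top
        _ = ENNReal.ofReal (1 + ε) * P := by
            rw [hPdef, limsup_comp_mul (by linarith : (0 : ℝ) < 1 + ε)
              (fun s => ν (Ω \ innerSet Ω s) / ENNReal.ofReal s)]
    have htend : Tendsto (fun ε : ℝ => ENNReal.ofReal (1 + ε) * P) (𝓝[>] (0 : ℝ)) (𝓝 P) := by
      have h1 : Tendsto (fun ε : ℝ => ENNReal.ofReal (1 + ε)) (𝓝[>] (0 : ℝ)) (𝓝 1) := by
        have h2 : Tendsto (fun ε : ℝ => ENNReal.ofReal (1 + ε)) (𝓝 (0 : ℝ))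
            (𝓝 (ENNReal.ofReal (1 + 0))) :=
          (ENNReal.continuous_ofReal.tendsto _).comp
            ((continuous_const.add continuous_id).tendsto 0)
        simpa using h2.mono_left nhdsWithin_le_nhds
      have h3 := ENNReal.Tendsto.mul_const (b := P) h1 (Or.inl one_ne_zero)
      simpa using h3
    exact ge_of_tendsto htend (by
      filter_upwards [self_mem_nhdsWithin] with ε hε
      exact hlim_le ε hε)
  -- lower bound
  have hlower : totalVariationOn ν Set.univ (Ω.indicator fun _ => (1 : ℝ)) ≤
      Filter.liminf F (𝓝[>] (0 : ℝ)) := by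
    by_contra hlt
    push_neg at hlt
    obtain ⟨a, ha1, ha2⟩ := exists_between hlt
    have hfreq : ∃ᶠ t in 𝓝[>] (0 : ℝ), F t < a := by
      by_contra hcon
      rw [Filter.not_frequently] at hcon
      have hle : a ≤ Filter.liminf F (𝓝[>] (0 : ℝ)) :=
        Filter.le_liminf_of_le (by isBoundedDefault)
          (hcon.mono fun t ht => not_lt.mp ht)
      exact absurd (lt_of_le_of_lt hle ha1) (lt_irrefl _)
    have hseq : ∀ n : ℕ, ∃ t : ℝ, (t ∈ Set.Ioo (0 : ℝ) ((n : ℝ) + 1)⁻¹) ∧ F t < a := by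
      intro n
      have hmem : Set.Ioo (0 : ℝ) ((n : ℝ) + 1)⁻¹ ∈ 𝓝[>] (0 : ℝ) :=
        Ioo_mem_nhdsGT_of_mem ⟨le_refl 0, by positivity⟩
      obtain ⟨t, h1, h2⟩ := (hfreq.and_eventually (Filter.eventually_of_mem hmem
        (fun t ht => ht))).exists
      exact ⟨t, h2, h1⟩
    choose ts hts hFts using hseq
    have hts0 : ∀ n, 0 < ts n := fun n => (hts n).1
    -- convergence of the measure of the collar to 0
    have hA0 : Tendsto (fun n : ℕ => ν (Ω \ innerSet Ω ((n : ℝ) + 1)⁻¹)) atTop (𝓝 0) := by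
      have hanti : Antitone (fun n : ℕ => Ω \ innerSet Ω ((n : ℝ) + 1)⁻¹) := by
        intro k m hkm
        refine Set.diff_subset_diff_right ?_
        rintro x ⟨hxΩ, hxd⟩
        refine ⟨hxΩ, le_trans ?_ hxd⟩
        have h2 : (k : ℝ) + 1 ≤ (m : ℝ) + 1 :=
          add_le_add_left (Nat.cast_le.mpr hkm) 1
        gcongr
      have hinter : (⋂ n : ℕ, Ω \ innerSet Ω ((n : ℝ) + 1)⁻¹) = ∅ := by
        rw [Set.eq_empty_iff_forall_notMem]
        intro x hx
        rw [Set.mem_iInter] at hx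
        have hxΩ : x ∈ Ω := (hx 0).1
        have hd : Metric.infDist x Ωᶜ ≤ 0 := by
          have htnd : Tendsto (fun n : ℕ => ((n : ℝ) + 1)⁻¹) atTop (𝓝 0) := by
            simpa [one_div] using tendsto_one_div_add_atTop_nhds_zero_nat (𝕜 := ℝ)
          refine ge_of_tendsto htnd (Filter.Eventually.of_forall fun n => ?_)
          have h2 := (hx n).2
          rw [innerSet_eq, Set.mem_inter_iff, not_and, Set.mem_setOf_eq, not_le] at h2
          exact (h2 hxΩ).le
        have hd0 : Metric.infDist x Ωᶜ = 0 := le_antisymm hd Metric.infDist_nonneg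
        have hxc : x ∈ closure (Ωᶜ : Set X) :=
          (Metric.mem_closure_iff_infDist_zero hcompl).mpr hd0
        rw [hΩopen.isClosed_compl.closure_eq] at hxc
        exact hxc hxΩ
      have htend := tendsto_measure_iInter_atTop
        (fun n => (measSet_innerDiff Ω hΩopen _).nullMeasurableSet) hanti
        ⟨0, ne_of_lt (lt_of_le_of_lt (measure_mono Set.diff_subset) hνΩ.lt_top)⟩
      simpa [Function.comp_def, hinter] using htend
    -- pointwise L¹ bound
    have hboundL1 : ∀ t : ℝ, 0 < t →
        (∫⁻ x in Set.univ,
            ENNReal.ofReal |definingSeq Ω t x - Ω.indicator (fun _ => (1 : ℝ)) x| ∂ν) ≤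
          ν (Ω \ innerSet Ω t) := by
      intro t ht
      rw [Measure.restrict_univ]
      have hptwise : ∀ x, ENNReal.ofReal |definingSeq Ω t x - Ω.indicator (fun _ => (1 : ℝ)) x| ≤
          (Ω \ innerSet Ω t).indicator (fun _ => (1 : ℝ≥0∞)) x := by
        intro x
        by_cases hxΩ : x ∈ Ω
        · by_cases hxd : t ≤ Metric.infDist x Ωᶜ
          · have hx1 : definingSeq Ω t x = 1 := by
              rw [defSeq_eq' Ω ht]
              exact min_eq_left ((one_le_div ht).mpr hxd)
            have hnm : x ∉ Ω \ innerSet Ω t := fun h => h.2 ⟨hxΩ, hxd⟩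
            simp [hx1, Set.indicator_of_mem hxΩ, Set.indicator_of_notMem hnm]
          · have hmem2 : x ∈ Ω \ innerSet Ω t := ⟨hxΩ, fun h => hxd h.2⟩
            rw [Set.indicator_of_mem hmem2]
            rw [defSeq_eq' Ω ht, Set.indicator_of_mem hxΩ]
            refine ENNReal.ofReal_le_one.mpr ?_
            have hm0 : (0 : ℝ) ≤ min 1 (Metric.infDist x Ωᶜ / t) :=
              le_min zero_le_one (div_nonneg Metric.infDist_nonneg ht.le)
            have hm1 : min 1 (Metric.infDist x Ωᶜ / t) ≤ 1 := min_le_left _ _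
            rw [abs_le]
            constructor <;> linarith
        · have hnm : x ∉ Ω \ innerSet Ω t := fun h => hxΩ h.1
          have h0 : definingSeq Ω t x = 0 := by
            simp [definingSeq, Set.indicator_of_notMem hxΩ]
          simp [h0, Set.indicator_of_notMem hxΩ, Set.indicator_of_notMem hnm]
      refine (lintegral_mono hptwise).trans ?_
      rw [lintegral_indicator_const (measSet_innerDiff Ω hΩopen t), one_mul]
    have hL1 : TendstoL1 ν Set.univ (fun n => definingSeq Ω (ts n))
        (Ω.indicator fun _ => (1 : ℝ)) := by
      unfold TendstoL1
      refine tendsto_of_tendsto_of_tendsto_of_le_of_le tendsto_const_nhds hA0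
        (fun n => zero_le) (fun n => ?_)
      refine (hboundL1 (ts n) (hts0 n)).trans ?_
      refine measure_mono (Set.diff_subset_diff_right ?_)
      rintro x ⟨hxΩ, hxd⟩
      exact ⟨hxΩ, le_trans (le_of_lt (hts n).2) hxd⟩
    have hlip : ∀ n, LocLipschitzOn Set.univ (definingSeq Ω (ts n)) := by
      intro n x _
      refine ⟨Real.toNNReal (1 / ts n), Set.univ, Filter.univ_mem, ?_⟩
      rw [defSeq_eq' Ω (hts0 n)]
      refine LipschitzWith.lipschitzOnWith (LipschitzWith.of_dist_le_mul fun a b => ?_)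
      rw [Real.dist_eq, Real.coe_toNNReal _ (one_div_pos.mpr (hts0 n)).le]
      calc |min 1 (Metric.infDist a Ωᶜ / ts n) - min 1 (Metric.infDist b Ωᶜ / ts n)|
          ≤ dist a b / ts n := defSeq_dist_le Ω (hts0 n) b a
        _ = 1 / ts n * dist a b := by ring
    have hmem : (Filter.liminf (fun n => ∫⁻ x in Set.univ,
        slopeWithin Set.univ (definingSeq Ω (ts n)) x ∂ν) atTop) ∈
        {V : ℝ≥0∞ | ∃ un : ℕ → X → ℝ, (∀ n, LocLipschitzOn Set.univ (un n)) ∧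
          TendstoL1 ν Set.univ un (Ω.indicator fun _ => (1 : ℝ)) ∧
          V = Filter.liminf
            (fun n => ∫⁻ x in Set.univ, slopeWithin Set.univ (un n) x ∂ν) atTop} :=
      ⟨fun n => definingSeq Ω (ts n), hlip, hL1, rfl⟩
    have hTVle := sInf_le hmem
    have hliminf_le : Filter.liminf (fun n => ∫⁻ x in Set.univ,
        slopeWithin Set.univ (definingSeq Ω (ts n)) x ∂ν) atTop ≤ a := by
      refine Filter.liminf_le_of_frequently_le' (Filter.Frequently.of_forall fun n => ?_)
      rw [Measure.restrict_univ]
      exact (hFts n).le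
    exact absurd (lt_of_le_of_lt (hTVle.trans hliminf_le) ha2) (lt_irrefl _)
  -- combine
  rw [heq]
  exact tendsto_of_le_liminf_of_limsup_le (heq ▸ hlower) hupper

end
end

section
/- Let (𝔛,d) be a complete separable metric space and ν a doubling Borel measure such that (𝔛,d,ν) supports a weak (1,1)-Poincaré inequality. Let Ω ⊆ 𝔛 be an open bounded regular domain with ν(∂Ω) = 0 such that (Ω,d,ν) supports a weak (1,1)-Poincaré inequality. Then the inner perimeter of Ω in 𝔛 equals the perimeter of Ω: P_+(Ω,𝔛) = |D1_Ω|_ν(𝔛). -/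
open MeasureTheory Metric Set Filter Topology ENNReal

noncomputable section

variable {X : Type*}

private lemma slope_le_lipschitz' [MetricSpace X] {u : X → ℝ} {K : NNReal}
    (hu : LipschitzWith K u) (x : X) : slopeWithin Set.univ u x ≤ (K : ℝ≥0∞) := by
  refine Filter.limsup_le_of_le (by isBoundedDefault) ?_
  filter_upwards [self_mem_nhdsWithin] with y hy
  have hyx : y ≠ x := by simpa using hy.2
  have hd : 0 < dist y x := dist_pos.2 hyx
  have hle : |u y - u x| / dist y x ≤ (K : ℝ) := by
    rw [div_le_iff₀ hd]
    simpa [Real.dist_eq] using hu.dist_le_mul y x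
  calc ENNReal.ofReal (|u y - u x| / dist y x) ≤ ENNReal.ofReal (K : ℝ) :=
        ENNReal.ofReal_le_ofReal hle
    _ = (K : ℝ≥0∞) := ENNReal.ofReal_coe_nnreal

private lemma slope_zero_of_eventually_const' [MetricSpace X] {u : X → ℝ} {x : X}
    (h : ∀ᶠ y in 𝓝 x, u y = u x) : slopeWithin Set.univ u x = 0 := by
  refine le_antisymm ?_ zero_le
  refine Filter.limsup_le_of_le (by isBoundedDefault) ?_
  filter_upwards [eventually_nhdsWithin_of_eventually_nhds h] with y hy
  simp [hy]

/-- for a regular domain `Ω`, the inner perimeter of `Ω` in `X` equals the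
perimeter: `P₊(Ω, X) = |D1_Ω|_ν(X)`. -/
theorem innerPerimeter_eq_perimeter_of_regular
    [MetricSpace X] [CompleteSpace X] [TopologicalSpace.SeparableSpace X]
    [MeasurableSpace X] [BorelSpace X] (ν : Measure X) (Ω : Set X)
    (hdoub : DoublingOn ν Set.univ) (hPI : WeakPoincareOn ν Set.univ)
    (hΩbd : Bornology.IsBounded Ω) (hreg : IsRegularDomain ν Ω)
    (hnull : ν (frontier Ω) = 0) (hPIΩ : WeakPoincareOn ν Ω) :
    innerPerimeter ν Ω Set.univ =
      totalVariationOn ν Set.univ (Ω.indicator fun _ => (1 : ℝ)) := by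
  classical
  obtain ⟨hΩopen, hBV, hlimsup⟩ := hreg
  -- easy direction: total variation ≤ inner perimeter
  have hge : totalVariationOn ν Set.univ (Ω.indicator fun _ => (1 : ℝ)) ≤
      innerPerimeter ν Ω Set.univ := by
    apply sInf_le_sInf
    rintro V ⟨ψ, h1, h2, h3, h4⟩
    exact ⟨ψ, h1, h2, h4⟩
  refine le_antisymm ?_ hge
  by_cases hc : Ωᶜ = ∅
  · -- degenerate case Ω = univ
    have hΩu : Ω = Set.univ := by
      rw [← compl_compl Ω, hc, Set.compl_empty]
    subst hΩu
    have h0 : innerPerimeter ν Set.univ Set.univ ≤ 0 := by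
      apply sInf_le
      refine ⟨fun _ _ => 1, ?_, ?_, ?_, ?_⟩
      · intro n x _
        exact ⟨0, Set.univ, Filter.univ_mem, (LipschitzWith.const 1).lipschitzOnWith⟩
      · have : ∀ n : ℕ, (∫⁻ x in Set.univ,
            ENNReal.ofReal |(1 : ℝ) - (Set.univ.indicator fun _ => (1:ℝ)) x| ∂ν) = 0 := by
          intro n; simp
        unfold TendstoL1
        simpa [this] using (tendsto_const_nhds : Tendsto (fun _ : ℕ => (0:ℝ≥0∞)) atTop (𝓝 0))
      · intro n x hx; simp at hx
      · have hs : ∀ x : X, slopeWithin Set.univ (fun _ => (1:ℝ)) x = 0 := fun x =>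
          slope_zero_of_eventually_const' (Filter.Eventually.of_forall fun _ => rfl)
        simp [hs]
    exact h0.trans zero_le
  -- main case
  have hne : Ωᶜ.Nonempty := Set.nonempty_iff_ne_empty.2 hc
  set F : ℝ → ℝ≥0∞ := fun t => ν (Ω \ innerSet Ω t) / ENNReal.ofReal t with hF
  set L : ℝ≥0∞ := Filter.limsup F (𝓝[>] (0:ℝ)) with hL
  have hLt : L ≠ ⊤ := by
    rw [← hlimsup]; exact hBV.2.ne
  -- select good scales
  have hsel : ∀ n : ℕ, ∃ s : ℝ, 0 < s ∧ s < 1/(n+1) ∧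
      F s < L + ENNReal.ofReal (1/(n+1)) := by
    intro n
    have hδ : (0:ℝ) < 1/(n+1) := by positivity
    have hlt : Filter.limsup F (𝓝[>] (0:ℝ)) < L + ENNReal.ofReal (1/(n+1)) := by
      rw [← hL]
      exact ENNReal.lt_add_right hLt (by simpa using (ENNReal.ofReal_pos.2 hδ).ne')
    have hev := Filter.eventually_lt_of_limsup_lt hlt
    have hIoo : Set.Ioo (0:ℝ) (1/(n+1)) ∈ 𝓝[>] (0:ℝ) :=
      Ioo_mem_nhdsGT_of_mem ⟨le_refl 0, hδ⟩
    obtain ⟨s, hs1, hs2⟩ := (hev.and (eventually_of_mem hIoo fun x hx => hx)).exists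
    exact ⟨s, hs2.1, hs2.2, hs1⟩
  choose s hs0 hslt hsF using hsel
  set t : ℕ → ℝ := fun n => s n * ((n+1)/(n+2)) with htdef
  have ht0 : ∀ n, 0 < t n := by
    intro n
    have : (0:ℝ) < (n+1)/(n+2) := by positivity
    exact mul_pos (hs0 n) this
  have htlt : ∀ n, t n < s n := by
    intro n
    have h1 : ((n:ℝ)+1)/(n+2) < 1 := by
      rw [div_lt_one (by positivity)]; linarith
    calc t n = s n * ((n+1)/(n+2)) := rfl
      _ < s n * 1 := by exact mul_lt_mul_of_pos_left h1 (hs0 n)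
      _ = s n := mul_one _
  set ψ : ℕ → X → ℝ := fun n => definingSeq Ω (t n) with hψdef
  -- the defining sequence is globally given by the min formula
  have hψeq : ∀ n, ψ n = fun x => min 1 (Metric.infDist x Ωᶜ / t n) := by
    intro n
    funext x
    by_cases hx : x ∈ Ω
    · simp [hψdef, definingSeq, Set.indicator_of_mem hx]
    · have h0 : Metric.infDist x Ωᶜ = 0 := Metric.infDist_zero_of_mem hx
      simp [hψdef, definingSeq, Set.indicator_of_notMem hx, h0,
        min_eq_right (zero_le_one' ℝ)]
  -- Lipschitz bound
  have hK : ∀ n, LipschitzWith (Real.toNNReal (1/t n)) (ψ n) := by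
    intro n
    rw [hψeq n]
    have hg : LipschitzWith (Real.toNNReal (1/t n))
        (fun x : X => Metric.infDist x Ωᶜ / t n) := by
      apply LipschitzWith.of_dist_le_mul
      intro x y
      have hd : dist (Metric.infDist x Ωᶜ) (Metric.infDist y Ωᶜ) ≤ dist x y := by
        simpa using (lipschitz_infDist_pt (Ωᶜ : Set X)).dist_le_mul x y
      rw [Real.dist_eq, ← sub_div, abs_div, abs_of_pos (ht0 n),
        Real.coe_toNNReal _ (le_of_lt (one_div_pos.2 (ht0 n)))]
      rw [div_le_iff₀ (ht0 n)]
      calc |Metric.infDist x Ωᶜ - Metric.infDist y Ωᶜ| ≤ dist x y := by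
            simpa [Real.dist_eq] using hd
        _ = 1 / t n * dist x y * t n := by field_simp [(ht0 n).ne']
    have hcon : LipschitzWith (Real.toNNReal (1/t n)) (fun _ : X => (1:ℝ)) :=
      (LipschitzWith.const (1:ℝ)).weaken zero_le
    simpa [max_self] using hcon.min hg
  -- slope vanishes away from the closure and deep inside
  have hslope0 : ∀ n x, x ∉ closure Ω ∩ {y | Metric.infDist y Ωᶜ ≤ t n} →
      slopeWithin Set.univ (ψ n) x = 0 := by
    intro n x hx
    apply slope_zero_of_eventually_const'
    rw [Set.mem_inter_iff, not_and_or] at hx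
    rcases hx with h | h
    · have hU : IsOpen (closure Ω)ᶜ := isClosed_closure.isOpen_compl
      filter_upwards [hU.mem_nhds h] with y hy
      have hyΩ : y ∉ Ω := fun hyy => hy (subset_closure hyy)
      have hxΩ : x ∉ Ω := fun hxx => h (subset_closure hxx)
      simp [hψdef, definingSeq, Set.indicator_of_notMem hyΩ,
        Set.indicator_of_notMem hxΩ]
    · have hxgt : t n < Metric.infDist x Ωᶜ := by simpa using h
      have hU : IsOpen {y : X | t n < Metric.infDist y Ωᶜ} :=
        isOpen_lt continuous_const (continuous_infDist_pt _)
      filter_upwards [hU.mem_nhds hxgt] with y hy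
      have h1 : (1:ℝ) ≤ Metric.infDist y Ωᶜ / t n := by
        rw [le_div_iff₀ (ht0 n)]; simpa using (le_of_lt hy)
      have h2 : (1:ℝ) ≤ Metric.infDist x Ωᶜ / t n := by
        rw [le_div_iff₀ (ht0 n)]; simpa using (le_of_lt hxgt)
      rw [hψeq n]
      simp [min_eq_left h1, min_eq_left h2]
  -- the key measure bound
  have hmeasB : ∀ n, ν (closure Ω ∩ {y | Metric.infDist y Ωᶜ ≤ t n}) ≤
      ν (Ω \ innerSet Ω (s n)) := by
    intro n
    have hsub : closure Ω ∩ {y | Metric.infDist y Ωᶜ ≤ t n} ⊆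
        frontier Ω ∪ (Ω \ innerSet Ω (s n)) := by
      rintro x ⟨hx1, hx2⟩
      by_cases hxΩ : x ∈ Ω
      · right
        refine ⟨hxΩ, fun hxi => ?_⟩
        have : s n ≤ Metric.infDist x Ωᶜ := hxi.2
        have : s n ≤ t n := le_trans this hx2
        exact absurd this (not_le.2 (htlt n))
      · left
        rw [frontier, hΩopen.interior_eq]
        exact ⟨hx1, hxΩ⟩
    calc ν (closure Ω ∩ {y | Metric.infDist y Ωᶜ ≤ t n}) ≤
          ν (frontier Ω ∪ (Ω \ innerSet Ω (s n))) := measure_mono hsub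
      _ ≤ ν (frontier Ω) + ν (Ω \ innerSet Ω (s n)) := measure_union_le _ _
      _ = ν (Ω \ innerSet Ω (s n)) := by rw [hnull, zero_add]
  have hνsn : ∀ n, ν (Ω \ innerSet Ω (s n)) ≤
      (L + ENNReal.ofReal (1/(n+1))) * ENNReal.ofReal (s n) := by
    intro n
    have := (hsF n).le
    rw [hF] at this
    exact (ENNReal.div_le_iff_le_mul
      (Or.inl (by simpa using (ENNReal.ofReal_pos.2 (hs0 n)).ne'))
      (Or.inl ENNReal.ofReal_ne_top)).1 this
  -- integral of the slope
  have hint : ∀ n, (∫⁻ x in Set.univ, slopeWithin Set.univ (ψ n) x ∂ν) ≤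
      ENNReal.ofReal (1/t n) * ν (Ω \ innerSet Ω (s n)) := by
    intro n
    set B := closure Ω ∩ {y : X | Metric.infDist y Ωᶜ ≤ t n} with hB
    have hBmeas : MeasurableSet B :=
      (isClosed_closure.inter (isClosed_le (continuous_infDist_pt _)
        continuous_const)).measurableSet
    have hpt : ∀ x, slopeWithin Set.univ (ψ n) x ≤
        B.indicator (fun _ => ENNReal.ofReal (1/t n)) x := by
      intro x
      by_cases hx : x ∈ B
      · rw [Set.indicator_of_mem hx]
        have := slope_le_lipschitz' (hK n) x
        simpa [ENNReal.ofReal] using this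
      · rw [Set.indicator_of_notMem hx, hslope0 n x hx]
    calc (∫⁻ x in Set.univ, slopeWithin Set.univ (ψ n) x ∂ν)
        = ∫⁻ x, slopeWithin Set.univ (ψ n) x ∂ν := by rw [Measure.restrict_univ]
      _ ≤ ∫⁻ x, B.indicator (fun _ => ENNReal.ofReal (1/t n)) x ∂ν :=
          lintegral_mono hpt
      _ = ENNReal.ofReal (1/t n) * ν B := by
          rw [lintegral_indicator hBmeas]; simp
      _ ≤ ENNReal.ofReal (1/t n) * ν (Ω \ innerSet Ω (s n)) := by
          exact mul_le_mul_right (hmeasB n) _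
  -- L¹ convergence
  have hL1 : TendstoL1 ν Set.univ ψ (Ω.indicator fun _ => (1:ℝ)) := by
    have hb : ∀ n, (∫⁻ x in Set.univ,
        ENNReal.ofReal |ψ n x - (Ω.indicator fun _ => (1:ℝ)) x| ∂ν) ≤
        (L + 1) * ENNReal.ofReal (1/(n+1)) := by
      intro n
      have hDmeas : MeasurableSet (Ω \ innerSet Ω (s n)) := by
        have h1 : MeasurableSet (innerSet Ω (s n)) := by
          have : innerSet Ω (s n) = Ω ∩ {x | s n ≤ Metric.infDist x Ωᶜ} := rfl
          rw [this]
          exact hΩopen.measurableSet.inter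
            ((isClosed_le continuous_const (continuous_infDist_pt _)).measurableSet)
        exact hΩopen.measurableSet.diff h1
      have hpt : ∀ x, ENNReal.ofReal |ψ n x - (Ω.indicator fun _ => (1:ℝ)) x| ≤
          (Ω \ innerSet Ω (s n)).indicator (fun _ => (1:ℝ≥0∞)) x := by
        intro x
        by_cases hx : x ∈ Ω \ innerSet Ω (s n)
        · rw [Set.indicator_of_mem hx]
          have h1 : (0:ℝ) ≤ min 1 (Metric.infDist x Ωᶜ / t n) :=
            le_min zero_le_one (div_nonneg Metric.infDist_nonneg (ht0 n).le)
          have h2 : min 1 (Metric.infDist x Ωᶜ / t n) ≤ 1 := min_le_left _ _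
          have hii : (Ω.indicator fun _ => (1:ℝ)) x = 1 := Set.indicator_of_mem hx.1 _
          rw [hψeq n, hii]
          refine ENNReal.ofReal_le_one.2 ?_
          rw [abs_sub_comm, abs_of_nonneg (by linarith)]
          linarith
        · rw [Set.indicator_of_notMem hx]
          rw [Set.mem_diff, not_and_or, not_not] at hx
          rcases hx with hx | hx
          · have hψ0 : ψ n x = 0 := Set.indicator_of_notMem hx _
            have hi0 : (Ω.indicator fun _ => (1:ℝ)) x = 0 := Set.indicator_of_notMem hx _
            simp [hψ0, hi0]
          · have h1 : (1:ℝ) ≤ Metric.infDist x Ωᶜ / t n := by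
              rw [le_div_iff₀ (ht0 n)]
              have := hx.2
              nlinarith [htlt n, hs0 n, ht0 n]
            have hψ1 : ψ n x = 1 := by rw [hψeq n]; simp [min_eq_left h1]
            have hi1 : (Ω.indicator fun _ => (1:ℝ)) x = 1 := Set.indicator_of_mem hx.1 _
            simp [hψ1, hi1]
      have hle1 : (∫⁻ x in Set.univ,
          ENNReal.ofReal |ψ n x - (Ω.indicator fun _ => (1:ℝ)) x| ∂ν) ≤
          ν (Ω \ innerSet Ω (s n)) := by
        calc (∫⁻ x in Set.univ,
            ENNReal.ofReal |ψ n x - (Ω.indicator fun _ => (1:ℝ)) x| ∂ν)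
            = ∫⁻ x, ENNReal.ofReal |ψ n x - (Ω.indicator fun _ => (1:ℝ)) x| ∂ν := by
              rw [Measure.restrict_univ]
          _ ≤ ∫⁻ x, (Ω \ innerSet Ω (s n)).indicator (fun _ => (1:ℝ≥0∞)) x ∂ν :=
              lintegral_mono hpt
          _ = ν (Ω \ innerSet Ω (s n)) := by rw [lintegral_indicator hDmeas]; simp
      refine hle1.trans ((hνsn n).trans ?_)
      have e1 : L + ENNReal.ofReal (1/(n+1)) ≤ L + 1 := by
        exact add_le_add_right (ENNReal.ofReal_le_one.2 (by
          rw [div_le_one (by positivity : (0:ℝ) < n+1)]; linarith [Nat.cast_nonneg (α := ℝ) n])) L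
      have e2 : ENNReal.ofReal (s n) ≤ ENNReal.ofReal (1/(n+1)) :=
        ENNReal.ofReal_le_ofReal (hslt n).le
      exact mul_le_mul' e1 e2
    have hup : Tendsto (fun n : ℕ => (L + 1) * ENNReal.ofReal (1/(n+1))) atTop (𝓝 0) := by
      have h2 : Tendsto (fun n : ℕ => ENNReal.ofReal (1/(n+1))) atTop (𝓝 0) := by
        have := ENNReal.tendsto_ofReal
          (tendsto_one_div_add_atTop_nhds_zero_nat)
        simpa using this
      have := ENNReal.Tendsto.const_mul (a := L + 1) h2
        (Or.inr (ENNReal.add_ne_top.2 ⟨hLt, ENNReal.one_ne_top⟩))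
      simpa using this
    exact tendsto_of_tendsto_of_tendsto_of_le_of_le tendsto_const_nhds hup
      (fun n => zero_le) hb
  -- inner-perimeter competitor
  have hlip : ∀ n, LocLipschitzOn Set.univ (ψ n) := by
    intro n x _
    exact ⟨_, Set.univ, Filter.univ_mem, (hK n).lipschitzOnWith⟩
  have hz : ∀ n, ∀ x ∈ Set.univ \ Ω, ψ n x = 0 := by
    intro n x hx
    exact Set.indicator_of_notMem hx.2 _
  refine le_trans (sInf_le ⟨ψ, hlip, hL1, hz, rfl⟩) ?_
  rw [hlimsup]
  -- bound the liminf
  have hbound : ∀ n, (∫⁻ x in Set.univ, slopeWithin Set.univ (ψ n) x ∂ν) ≤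
      (L + ENNReal.ofReal (1/(n+1))) * ENNReal.ofReal (((n:ℝ)+2)/((n:ℝ)+1)) := by
    intro n
    refine (hint n).trans ?_
    calc ENNReal.ofReal (1/t n) * ν (Ω \ innerSet Ω (s n))
        ≤ ENNReal.ofReal (1/t n) * ((L + ENNReal.ofReal (1/(n+1))) *
            ENNReal.ofReal (s n)) := mul_le_mul_right (hνsn n) _
      _ = (L + ENNReal.ofReal (1/(n+1))) *
            (ENNReal.ofReal (1/t n) * ENNReal.ofReal (s n)) := by ring
      _ = (L + ENNReal.ofReal (1/(n+1))) * ENNReal.ofReal ((1/t n) * s n) := by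
            rw [ENNReal.ofReal_mul (le_of_lt (one_div_pos.2 (ht0 n)))]
      _ = (L + ENNReal.ofReal (1/(n+1))) * ENNReal.ofReal (((n:ℝ)+2)/((n:ℝ)+1)) := by
            congr 1
            congr 1
            rw [htdef]
            have hsn := (hs0 n).ne'
            field_simp
  have htend : Tendsto (fun n : ℕ => (L + ENNReal.ofReal (1/(n+1))) *
      ENNReal.ofReal (((n:ℝ)+2)/((n:ℝ)+1))) atTop (𝓝 L) := by
    have h1 : Tendsto (fun n : ℕ => (1:ℝ)/(n+1)) atTop (𝓝 0) :=
      tendsto_one_div_add_atTop_nhds_zero_nat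
    have h2 : Tendsto (fun n : ℕ => ENNReal.ofReal (1/(n+1))) atTop (𝓝 0) := by
      simpa using ENNReal.tendsto_ofReal h1
    have h3 : Tendsto (fun n : ℕ => L + ENNReal.ofReal (1/(n+1))) atTop (𝓝 L) := by
      simpa using tendsto_const_nhds.add h2
    have h4 : Tendsto (fun n : ℕ => ((n:ℝ)+2)/((n:ℝ)+1)) atTop (𝓝 1) := by
      have he : ∀ n : ℕ, ((n:ℝ)+2)/((n:ℝ)+1) = 1 + 1/((n:ℝ)+1) := by
        intro n; field_simp; ring
      rw [funext he]
      simpa using tendsto_const_nhds.add h1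
    have h5 : Tendsto (fun n : ℕ => ENNReal.ofReal (((n:ℝ)+2)/((n:ℝ)+1)))
        atTop (𝓝 1) := by
      simpa using ENNReal.tendsto_ofReal h4
    have := ENNReal.Tendsto.mul h3 (Or.inr one_ne_top) h5 (Or.inl one_ne_zero)
    simpa using this
  calc Filter.liminf (fun n => ∫⁻ x in Set.univ, slopeWithin Set.univ (ψ n) x ∂ν) atTop
      ≤ Filter.liminf (fun n : ℕ => (L + ENNReal.ofReal (1/(n+1))) *
          ENNReal.ofReal (((n:ℝ)+2)/((n:ℝ)+1))) atTop :=
        Filter.liminf_le_liminf (Filter.Eventually.of_forall hbound)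
    _ = L := htend.liminf_eq


end
end

section
/- Let (𝔛,d) be a complete separable metric space and ν a doubling Borel regular measure on 𝔛. Let Ω ⊆ 𝔛 be open and bounded, and suppose there is C > 0 such that ν(B(x,r) ∩ Ω) ≥ C ν(B(x,r)) for ℋ-a.e. x ∈ ∂Ω and all r ∈ (0, diam Ω) (the measure density condition). Then ν(∂Ω) = 0. -/
open MeasureTheory Metric Set Filter Topology ENNReal

noncomputable section

variable {X : Type*}

private lemma null_of_codimOneH_null [MetricSpace X] [MeasurableSpace X] (ν : Measure X)
    {A : Set X} (h : codimOneH ν A = 0) : ν A = 0 := by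
  have h1 : codimOneHPre ν 1 A = 0 := by
    refine le_antisymm ?_ zero_le
    rw [← h]
    exact le_iSup₂ (f := fun (R : ℝ) (_ : 0 < R) => codimOneHPre ν R A) 1 one_pos
  refine le_antisymm ?_ zero_le
  rw [← h1]
  refine le_iInf fun c => le_iInf fun hc => ?_
  calc ν A ≤ ν (⋃ i, ball (c i).1 (c i).2) := measure_mono hc.2
    _ ≤ ∑' i, ν (ball (c i).1 (c i).2) := measure_iUnion_le _
    _ ≤ ∑' i, ν (ball (c i).1 (c i).2) / ENNReal.ofReal (c i).2 := by
        refine ENNReal.tsum_le_tsum fun i => ?_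
        conv_lhs => rw [← div_one (ν (ball (c i).1 (c i).2))]
        exact ENNReal.div_le_div_left (ENNReal.ofReal_le_one.2 (hc.1 i).2) _

/-- if `Ω` is an open bounded subset of a complete separable metric space with
a doubling Borel (regular) measure, and `Ω` satisfies the measure density condition, then the
boundary of `Ω` is `ν`-null. -/
theorem measure_frontier_eq_zero_of_measure_density
    [MetricSpace X] [CompleteSpace X] [TopologicalSpace.SeparableSpace X]
    [MeasurableSpace X] [BorelSpace X] (ν : Measure X)
    (hdoub : DoublingOn ν Set.univ) (Ω : Set X)
    (hΩopen : IsOpen Ω) (hΩbd : Bornology.IsBounded Ω)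
    (hmd : ∃ C : NNReal, 0 < C ∧ HAEOn ν (frontier Ω)
      (fun x => ∀ r : ℝ, 0 < r → r < Metric.diam Ω →
        (C : ℝ≥0∞) * ν (ball x r) ≤ ν (Ω ∩ ball x r))) :
    ν (frontier Ω) = 0 := by
  -- Trivial case: `Ω` is a subsingleton, hence clopen, hence has empty frontier.
  by_cases hsub : Ω.Subsingleton
  · rcases hsub.eq_empty_or_singleton with rfl | ⟨a, rfl⟩
    · simp
    · rw [IsClopen.frontier_eq ⟨isClosed_singleton, hΩopen⟩]
      simp
  -- Otherwise `diam Ω > 0`.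
  rw [Set.not_subsingleton_iff] at hsub
  obtain ⟨a, ha, b, hb, hab⟩ := hsub
  have hdiam : 0 < Metric.diam Ω :=
    lt_of_lt_of_le (dist_pos.2 hab) (Metric.dist_le_diam_of_mem hΩbd ha hb)
  -- Unpack the doubling hypothesis.
  obtain ⟨Cd, hCd1, hd⟩ := hdoub
  simp only [Set.mem_univ, Set.univ_inter, true_implies, forall_const] at hd
  have hfin : ∀ (x : X) (r : ℝ), 0 < r → ν (ball x r) < ⊤ := fun x r hr => (hd x r hr).2.2
  have hpos : ∀ (x : X) (r : ℝ), 0 < r → 0 < ν (ball x r) := by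
    intro x r hr
    have := (hd x (r / 2) (by linarith)).1
    rwa [show 2 * (r / 2) = r by ring] at this
  have hdbl : ∀ (x : X) (r : ℝ), 0 < r → ν (ball x (2 * r)) ≤ (Cd : ℝ≥0∞) * ν (ball x r) :=
    fun x r hr => (hd x r hr).2.1
  -- Instances needed for the Lebesgue density theorem.
  haveI : SecondCountableTopology X :=
    UniformSpace.secondCountable_of_separable X
  haveI : IsLocallyFiniteMeasure ν :=
    ⟨fun x => ⟨ball x 1, ball_mem_nhds x one_pos, hfin x 1 one_pos⟩⟩
  haveI : IsUnifLocDoublingMeasure ν := by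
    refine ⟨⟨Cd * Cd, ?_⟩⟩
    filter_upwards [self_mem_nhdsWithin] with ε (hε : 0 < ε) x
    calc ν (closedBall x (2 * ε)) ≤ ν (ball x (2 * (2 * ε))) :=
          measure_mono (closedBall_subset_ball (by linarith))
      _ ≤ (Cd : ℝ≥0∞) * ν (ball x (2 * ε)) := hdbl x (2 * ε) (by linarith)
      _ ≤ (Cd : ℝ≥0∞) * ((Cd : ℝ≥0∞) * ν (ball x ε)) := by
          gcongr; exact hdbl x ε hε
      _ ≤ ↑(Cd * Cd) * ν (closedBall x ε) := by
          rw [ENNReal.coe_mul, mul_assoc]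
          gcongr
          exact ball_subset_closedBall
  obtain ⟨C, hCpos, hH⟩ := hmd
  set P : X → Prop := fun x => ∀ r : ℝ, 0 < r → r < Metric.diam Ω →
    (C : ℝ≥0∞) * ν (ball x r) ≤ ν (Ω ∩ ball x r) with hP
  set N : Set X := {x ∈ frontier Ω | ¬ P x} with hN
  have hνN : ν N = 0 := null_of_codimOneH_null ν hH
  -- Lebesgue density: a.e. point of `∂Ω` has full density for `∂Ω`.
  have hae : ∀ᵐ x ∂ν.restrict (frontier Ω), x ∈ N := by
    filter_upwards [IsUnifLocDoublingMeasure.ae_tendsto_measure_inter_div ν (frontier Ω) 1,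
      ae_restrict_mem (isClosed_frontier.measurableSet)] with x hdens hxF
    refine ⟨hxF, fun hPx => ?_⟩
    have htends : Tendsto
        (fun r : ℝ => ν (frontier Ω ∩ closedBall x r) / ν (closedBall x r))
        (𝓝[>] (0 : ℝ)) (𝓝 1) := by
      refine hdens (fun r : ℝ => x) (fun r : ℝ => r) tendsto_id ?_
      filter_upwards [self_mem_nhdsWithin] with r (hr : 0 < r)
      simp only [mem_closedBall, dist_self, one_mul]
      linarith
    -- For small `r`, the density ratio of `∂Ω` is bounded away from `1`.
    have hev : ∀ᶠ r in 𝓝[>] (0 : ℝ),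
        ν (frontier Ω ∩ closedBall x r) / ν (closedBall x r) + (C : ℝ≥0∞) / Cd ≤ 1 := by
      filter_upwards [Ioo_mem_nhdsGT_of_mem (Set.left_mem_Ico.2 hdiam)] with r hr
      obtain ⟨hr0, hrd⟩ := hr
      have hb0 := hpos x r hr0
      have hbt := hfin x r hr0
      have hglb : (C : ℝ≥0∞) / Cd ≤ ν (Ω ∩ closedBall x r) / ν (closedBall x r) := by
        calc (C : ℝ≥0∞) / Cd
            = (C : ℝ≥0∞) * ν (ball x r) / ((Cd : ℝ≥0∞) * ν (ball x r)) := by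
              rw [ENNReal.mul_div_mul_right _ _ hb0.ne' hbt.ne]
          _ ≤ ν (Ω ∩ closedBall x r) / ν (closedBall x r) := by
              refine ENNReal.div_le_div ?_ ?_
              · exact le_trans (hPx r hr0 hrd)
                  (measure_mono (Set.inter_subset_inter_right _ ball_subset_closedBall))
              · calc ν (closedBall x r) ≤ ν (ball x (2 * r)) :=
                      measure_mono (closedBall_subset_ball (by linarith))
                  _ ≤ (Cd : ℝ≥0∞) * ν (ball x r) := hdbl x r hr0
      have hdisj : Disjoint (frontier Ω ∩ closedBall x r) (Ω ∩ closedBall x r) := by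
        refine Set.disjoint_left.2 fun y hy hy' => ?_
        rw [hΩopen.frontier_eq] at hy
        exact hy.1.2 hy'.1
      calc ν (frontier Ω ∩ closedBall x r) / ν (closedBall x r) + (C : ℝ≥0∞) / Cd
          ≤ ν (frontier Ω ∩ closedBall x r) / ν (closedBall x r) +
            ν (Ω ∩ closedBall x r) / ν (closedBall x r) := by gcongr
        _ = (ν (frontier Ω ∩ closedBall x r) + ν (Ω ∩ closedBall x r)) / ν (closedBall x r) :=
            (ENNReal.add_div).symm
        _ = ν ((frontier Ω ∩ closedBall x r) ∪ (Ω ∩ closedBall x r)) / ν (closedBall x r) := by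
            rw [measure_union hdisj (hΩopen.measurableSet.inter measurableSet_closedBall)]
        _ ≤ ν (closedBall x r) / ν (closedBall x r) := by
            gcongr
            exact Set.union_subset Set.inter_subset_right Set.inter_subset_right
        _ ≤ 1 := ENNReal.div_self_le_one
    have hle : (1 : ℝ≥0∞) + (C : ℝ≥0∞) / Cd ≤ 1 + 0 := by
      rw [add_zero]
      exact le_of_tendsto (htends.add tendsto_const_nhds) hev
    have hzero : (C : ℝ≥0∞) / Cd = 0 :=
      le_antisymm ((ENNReal.add_le_add_iff_left ENNReal.one_ne_top).1 hle) zero_le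
    rcases ENNReal.div_eq_zero_iff.1 hzero with h0 | htop
    · exact (ENNReal.coe_pos.2 hCpos).ne' h0
    · exact ENNReal.coe_ne_top htop
  have hcompl : ν (Nᶜ ∩ frontier Ω) = 0 := by
    rw [← Measure.restrict_apply' isClosed_frontier.measurableSet]
    exact mem_ae_iff.1 hae
  refine le_antisymm ?_ zero_le
  calc ν (frontier Ω) ≤ ν (N ∪ Nᶜ ∩ frontier Ω) := by
        refine measure_mono fun y hy => ?_
        by_cases hyN : y ∈ N
        · exact Or.inl hyN
        · exact Or.inr ⟨hyN, hy⟩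
    _ ≤ ν N + ν (Nᶜ ∩ frontier Ω) := measure_union_le _ _
    _ = 0 := by rw [hνN, hcompl, add_zero]


end
end
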